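/- Let H be a graph, let s and n be positive integers, and let H^(s) be the s-fold blow-up of H. Then IR(H^(s), K_{1,n}) ≤ s·(|E(H)|·(n−1) + |V(H)|). -/

import Mathlib

open SimpleGraph

def ArrowsInd {V α β : Type*} (F : SimpleGraph V) (H : SimpleGraph α) (G : SimpleGraph β) : Prop :=
  ∀ c : Sym2 V → Bool,
    (∃ f : H ↪g F, ∀ u v, H.Adj u v → c s(f u, f v) = true) ∨
    (∃ g : G ↪g F, ∀ u v, G.Adj u v → c s(g u, g v) = false)

noncomputable def IR {α β : Type*} (H : SimpleGraph α) (G : SimpleGraph β) : ℕ :=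
  sInf {N : ℕ | ∃ F : SimpleGraph (Fin N), ArrowsInd F H G}

def StarGraph (n : ℕ) : SimpleGraph (Fin 1 ⊕ Fin n) := completeBipartiteGraph (Fin 1) (Fin n)

open Finset in
/-- The key combinatorial lemma: a suitably large non-uniform blow-up of `H` arrows
(`H^(s)`, `K_{1,n}`). -/
lemma arrowsInd_sigma (k s n : ℕ) (hn : 0 < n) (H : SimpleGraph (Fin k))
    (b : Fin k → ℕ)
    (hb : ∀ v : Fin k, s + {u : Fin k | u < v ∧ H.Adj u v}.ncard * (s * (n - 1)) ≤ b v) :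
    ArrowsInd (H.comap (Sigma.fst : (Σ v : Fin k, Fin (b v)) → Fin k))
      (H.comap (Prod.fst : Fin k × Fin s → Fin k)) (StarGraph n) := by
  classical
  set W := (Σ v : Fin k, Fin (b v)) with hW
  intro c
  by_cases hblue : ∃ (y : W) (u : Fin k), H.Adj y.1 u ∧
      n ≤ (univ.filter (fun x : W => x.1 = u ∧ c s(y, x) = false)).card
  · -- blue induced star
    right
    obtain ⟨y, u, hadj, hcard⟩ := hblue
    obtain ⟨t, hts, htc⟩ := Finset.exists_subset_card_eq hcard
    have htmem : ∀ x ∈ t, x.1 = u ∧ c s(y, x) = false := by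
      intro x hx
      have := hts hx
      simpa using (Finset.mem_filter.mp this).2
    let e : Fin n ≃ t := (Finset.equivFinOfCardEq htc).symm
    let g : Fin 1 ⊕ Fin n → W := Sum.elim (fun _ => y) (fun i => (e i : W))
    have hginj : Function.Injective g := by
      rintro (a | a) (b | b) hab
      · exact congrArg Sum.inl (Subsingleton.elim a b)
      · exfalso
        have h1 : (g (Sum.inl a)).1 = y.1 := rfl
        have h2 : (g (Sum.inr b)).1 = u := (htmem _ (e b).2).1
        rw [hab] at h1
        exact hadj.ne (h1.symm.trans h2)
      · exfalso
        have h1 : (g (Sum.inl b)).1 = y.1 := rfl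
        have h2 : (g (Sum.inr a)).1 = u := (htmem _ (e a).2).1
        rw [← hab] at h1
        exact hadj.ne (h1.symm.trans h2)
      · have : (e a : W) = (e b : W) := hab
        have := e.injective (Subtype.ext this)
        rw [this]
    have hyne : ∀ i : Fin n, H.Adj y.1 (e i : W).1 := by
      intro i
      rw [(htmem _ (e i).2).1]
      exact hadj
    refine ⟨⟨⟨g, hginj⟩, ?_⟩, ?_⟩
    · rintro (a | a) (b | b)
      · simp [g, StarGraph, comap_adj]
      · simp [g, StarGraph, comap_adj, hyne b]
      · constructor
        · intro h
          simp [StarGraph]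
        · intro h
          exact ((hyne a).symm : H.Adj _ _)
      · constructor
        · intro h
          exfalso
          have ha := (htmem _ (e a).2).1
          have hb' := (htmem _ (e b).2).1
          have : H.Adj (e a : W).1 (e b : W).1 := h
          rw [ha, hb'] at this
          exact this.ne rfl
        · intro h
          simp [StarGraph] at h
    · intro a b hab
      rcases a with a | a <;> rcases b with b | b
      · simp [StarGraph] at hab
      · exact (htmem _ (e b).2).2
      · rw [Sym2.eq_swap]
        exact (htmem _ (e a).2).2
      · simp [StarGraph] at hab
  · -- red blow-up
    left
    push_neg at hblue
    have hblue' : ∀ (y : W) (u : Fin k), H.Adj y.1 u →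
        (univ.filter (fun x : W => x.1 = u ∧ c s(y, x) = false)).card ≤ n - 1 := by
      intro y u h
      have := hblue y u h
      omega
    -- inductive construction of red transversals
    have key : ∀ m : ℕ, m ≤ k → ∃ T : Fin k → Finset W,
        ∀ v : Fin k, (v : ℕ) < m →
          ((∀ x ∈ T v, x.1 = v) ∧ (T v).card = s ∧
            ∀ u : Fin k, u < v → H.Adj u v → ∀ y ∈ T u, ∀ x ∈ T v, c s(y, x) = true) := by
      intro m
      induction m with
      | zero => exact fun _ => ⟨fun _ => ∅, fun v hv => absurd hv (by omega)⟩
      | succ m ih =>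
        intro hm
        obtain ⟨T, hT⟩ := ih (Nat.le_of_succ_le hm)
        set vm : Fin k := ⟨m, hm⟩ with hvm
        set C : Finset W := univ.filter (fun x : W => x.1 = vm) with hC
        set U : Finset (Fin k) := (Finset.Iio vm).filter (fun u => H.Adj u vm) with hU
        set B : Finset W := U.biUnion (fun u => (T u).biUnion
          (fun y => univ.filter (fun x : W => x.1 = vm ∧ c s(y, x) = false))) with hB
        have hCcard : C.card = b vm := by
          have himg : C = (univ : Finset (Fin (b vm))).image (fun i => (⟨vm, i⟩ : W)) := by
            ext ⟨v, j⟩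
            simp only [hC, Finset.mem_filter, Finset.mem_univ, true_and, Finset.mem_image]
            constructor
            · rintro rfl
              exact ⟨j, rfl⟩
            · rintro ⟨i, hi⟩
              exact (Sigma.mk.inj_iff.mp hi).1.symm
          rw [himg, Finset.card_image_of_injective _ (fun i j hij => by
            simpa using (Sigma.mk.inj_iff.mp hij).2), Finset.card_univ, Fintype.card_fin]
        have hUmem : ∀ u ∈ U, (u : ℕ) < m ∧ H.Adj u vm := by
          intro u hu
          rw [hU, Finset.mem_filter, Finset.mem_Iio] at hu
          exact ⟨hu.1, hu.2⟩
        have hBcard : B.card ≤ U.card * (s * (n - 1)) := by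
          calc B.card ≤ ∑ u ∈ U, ((T u).biUnion
              (fun y => univ.filter (fun x : W => x.1 = vm ∧ c s(y, x) = false))).card :=
              Finset.card_biUnion_le
          _ ≤ ∑ _u ∈ U, s * (n - 1) := by
              apply Finset.sum_le_sum
              intro u hu
              obtain ⟨hum, hua⟩ := hUmem u hu
              obtain ⟨hT1, hT2, _⟩ := hT u hum
              calc ((T u).biUnion _).card ≤ ∑ y ∈ T u,
                  (univ.filter (fun x : W => x.1 = vm ∧ c s(y, x) = false)).card :=
                  Finset.card_biUnion_le
              _ ≤ ∑ _y ∈ T u, (n - 1) := by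
                  apply Finset.sum_le_sum
                  intro y hy
                  apply hblue'
                  rw [hT1 y hy]
                  exact hua
              _ = s * (n - 1) := by rw [Finset.sum_const, hT2, smul_eq_mul]
          _ = U.card * (s * (n - 1)) := by rw [Finset.sum_const, smul_eq_mul]
        have hUd : U.card = {u : Fin k | u < vm ∧ H.Adj u vm}.ncard := by
          rw [Set.ncard_eq_toFinset_card']
          congr 1
          ext u
          simp [hU, Set.mem_toFinset]
        have hsle : s ≤ (C \ B).card := by
          have h1 := Finset.le_card_sdiff B C
          have h2 := hb vm
          rw [← hUd] at h2
          omega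
        obtain ⟨Tv, hTvsub, hTvcard⟩ := Finset.exists_subset_card_eq hsle
        refine ⟨Function.update T vm Tv, ?_⟩
        intro v hv
        by_cases hveq : v = vm
        · subst hveq
          rw [Function.update_self]
          have hTvC : ∀ x ∈ Tv, x ∈ C ∧ x ∉ B := by
            intro x hx
            have := hTvsub hx
            rw [Finset.mem_sdiff] at this
            exact this
          refine ⟨?_, hTvcard, ?_⟩
          · intro x hx
            have := (hTvC x hx).1
            rw [hC, Finset.mem_filter] at this
            exact this.2
          · intro u hu hadj y hy x hx
            have hunem : u ≠ vm := ne_of_lt hu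
            rw [Function.update_of_ne hunem] at hy
            have hxB := (hTvC x hx).2
            have hxC := (hTvC x hx).1
            rw [hC, Finset.mem_filter] at hxC
            by_contra hcc
            apply hxB
            rw [hB, Finset.mem_biUnion]
            refine ⟨u, ?_, ?_⟩
            · rw [hU, Finset.mem_filter, Finset.mem_Iio]
              exact ⟨hu, hadj⟩
            · rw [Finset.mem_biUnion]
              refine ⟨y, hy, ?_⟩
              rw [Finset.mem_filter]
              refine ⟨Finset.mem_univ _, hxC.2, ?_⟩
              cases hcv : c s(y, x) with
              | false => rfl
              | true => exact absurd hcv hcc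
        · have hvne : (v : ℕ) ≠ m := by
            intro h
            exact hveq (Fin.ext h)
          have hvlt : (v : ℕ) < m := by omega
          obtain ⟨h1, h2, h3⟩ := hT v hvlt
          rw [Function.update_of_ne hveq]
          refine ⟨h1, h2, ?_⟩
          intro u hu hadj y hy x hx
          have hune : u ≠ vm := by
            intro h
            rw [h] at hu
            have : (vm : ℕ) < (v : ℕ) := hu
            simp [hvm] at this
            omega
          rw [Function.update_of_ne hune] at hy
          exact h3 u hu hadj y hy x hx
    obtain ⟨T, hT⟩ := key k le_rfl
    have hprop := fun v : Fin k => hT v v.isLt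
    let e : ∀ v : Fin k, Fin s ≃ {x : W // x ∈ T v} :=
      fun v => (Finset.equivFinOfCardEq (hprop v).2.1).symm
    let f : Fin k × Fin s → W := fun p => (e p.1 p.2 : W)
    have hmem : ∀ p : Fin k × Fin s, f p ∈ T p.1 := fun p => (e p.1 p.2).2
    have hfst : ∀ p : Fin k × Fin s, (f p).1 = p.1 :=
      fun p => (hprop p.1).1 _ (hmem p)
    have hinj : Function.Injective f := by
      rintro ⟨a, i⟩ ⟨a', i'⟩ h
      have ha : a = a' := by
        have t1 : (f (a, i)).1 = a := hfst (a, i)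
        have t2 : (f (a', i')).1 = a' := hfst (a', i')
        rw [← t1, ← t2, h]
      subst ha
      have : e a i = e a i' := Subtype.ext h
      rw [(e a).injective this]
    refine ⟨⟨⟨f, hinj⟩, ?_⟩, ?_⟩
    · intro p q
      show H.Adj (f p).1 (f q).1 ↔ H.Adj p.1 q.1
      rw [hfst, hfst]
    · intro p q hadj
      have hadj' : H.Adj p.1 q.1 := hadj
      rcases lt_trichotomy p.1 q.1 with hlt | heq | hgt
      · exact (hprop q.1).2.2 p.1 hlt hadj' (f p) (hmem p) (f q) (hmem q)
      · exact absurd heq hadj'.ne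
      · rw [Sym2.eq_swap]
        exact (hprop p.1).2.2 q.1 hgt hadj'.symm (f q) (hmem q) (f p) (hmem p)

open Finset in
/-- for the s-fold blow-up H^(s) of H,
IR(H^(s), K_{1,n}) ≤ s·(|E(H)|·(n−1) + |V(H)|). -/
theorem IR_blowup_le (k s n : ℕ) (hs : 0 < s) (hn : 0 < n) (H : SimpleGraph (Fin k)) :
    IR (H.comap (Prod.fst : Fin k × Fin s → Fin k)) (StarGraph n)
      ≤ s * (Nat.card H.edgeSet * (n - 1) + k) := by
  classical
  set d : Fin k → ℕ := fun v => {u : Fin k | u < v ∧ H.Adj u v}.ncard with hd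
  set b : Fin k → ℕ := fun v => s + d v * (s * (n - 1)) with hbdef
  have key := arrowsInd_sigma k s n hn H b (fun v => le_rfl)
  set N := s * (Nat.card H.edgeSet * (n - 1) + k) with hN
  -- count edges
  have hdcard : ∀ v : Fin k, d v = (univ.filter (fun u => u < v ∧ H.Adj u v)).card := by
    intro v
    show {u : Fin k | u < v ∧ H.Adj u v}.ncard = _
    rw [Set.ncard_eq_toFinset_card']
    congr 1
    ext u
    simp [Set.mem_toFinset]
  have hE : ∑ v : Fin k, d v ≤ Nat.card H.edgeSet := by
    set S : Finset ((_ : Fin k) × Fin k) :=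
      univ.sigma (fun v => univ.filter (fun u => u < v ∧ H.Adj u v)) with hS
    have hsum : ∑ v : Fin k, d v = S.card := by
      rw [hS, Finset.card_sigma]
      exact Finset.sum_congr rfl (fun v _ => hdcard v)
    have hSmem : ∀ x : S, x.1.2 < x.1.1 ∧ H.Adj x.1.2 x.1.1 := by
      rintro ⟨⟨v, u⟩, hx⟩
      rw [hS, Finset.mem_sigma] at hx
      simpa using hx.2
    let φ : S → H.edgeSet := fun x =>
      ⟨s(x.1.2, x.1.1), (SimpleGraph.mem_edgeSet H).mpr (hSmem x).2⟩
    have hφ : Function.Injective φ := by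
      rintro ⟨⟨v, u⟩, hx⟩ ⟨⟨v', u'⟩, hx'⟩ h
      have h2 : s(u, v) = s(u', v') := congrArg Subtype.val h
      have ha := hSmem ⟨⟨v, u⟩, hx⟩
      have hb' := hSmem ⟨⟨v', u'⟩, hx'⟩
      rw [Sym2.eq_iff] at h2
      rcases h2 with ⟨rfl, rfl⟩ | ⟨rfl, rfl⟩
      · rfl
      · exact absurd hb'.1 (asymm ha.1)
    calc ∑ v : Fin k, d v = S.card := hsum
    _ = Nat.card S := (Nat.card_eq_finsetCard S).symm
    _ ≤ Nat.card H.edgeSet := Nat.card_le_card_of_injective φ hφ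
  have hcard : Fintype.card (Σ v : Fin k, Fin (b v)) ≤ N := by
    rw [Fintype.card_sigma]
    simp only [Fintype.card_fin]
    calc ∑ v : Fin k, b v = ∑ v : Fin k, (s + d v * (s * (n - 1))) := rfl
    _ = k * s + (∑ v : Fin k, d v) * (s * (n - 1)) := by
        rw [Finset.sum_add_distrib, Finset.sum_const, Finset.card_univ, Fintype.card_fin,
          smul_eq_mul, ← Finset.sum_mul]
    _ ≤ k * s + Nat.card H.edgeSet * (s * (n - 1)) := by
        exact Nat.add_le_add_left (Nat.mul_le_mul_right _ hE) _
    _ = N := by rw [hN]; ring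
  obtain ⟨ι⟩ := Function.Embedding.nonempty_of_card_le
    (α := (Σ v : Fin k, Fin (b v))) (β := Fin N) (by simpa using hcard)
  set F' := H.comap (Sigma.fst : (Σ v : Fin k, Fin (b v)) → Fin k) with hF'
  have harr : ArrowsInd (F'.map ι) (H.comap (Prod.fst : Fin k × Fin s → Fin k))
      (StarGraph n) := by
    intro c
    rcases key (fun e => c (e.map ι)) with ⟨f, hf⟩ | ⟨g, hg⟩
    · left
      refine ⟨(SimpleGraph.Embedding.map ι F').comp f, ?_⟩
      intro u v h
      have := hf u v h
      simpa [Sym2.map_pair_eq] using this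
    · right
      refine ⟨(SimpleGraph.Embedding.map ι F').comp g, ?_⟩
      intro u v h
      have := hg u v h
      simpa [Sym2.map_pair_eq] using this
  exact Nat.sInf_le ⟨F'.map ι, harr⟩
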